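/- Consider a single worker of computing power W > 0 and K ≥ 2 applications with c_1 < c_2 < ... < c_K, and define the bandwidths B_low = W·K/(Σ_{k=1}^K 1/c_k) and B_high = (W/K)·Σ_{k=1}^K c_k. Then B_low ≤ B_high; when the bandwidth equals B_low the Nash-equilibrium throughput of application k is α^before_k = B_low/(K·b_k) = W/(b_k·Σ_{p=1}^K 1/c_p), and when the bandwidth equals B_high it is α^after_k = W/(K·w_k); and for every application k the ratio satisfies α^before_k / α^after_k = K/(c_k·Σ_{p=1}^K 1/c_p). In particular, the throughput of an application k with K/(c_k·Σ_p 1/c_p) > 1 strictly decreases when the bandwidth is increased from B_low to B_high. -/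

import Mathlib

/-- The closed-form Nash-equilibrium rate of application `k` on a worker with
bandwidth `Bn` and computing power `Wn`, for `K` applications with task sizes
`b` and `w` (indexed `1,...,K`), writing `c_k = b_k/w_k` and `C_n = B_n/W_n`:
if `Σ_k C_n/c_k ≤ K` the rate is `B_n/(K·b_k)`; otherwise if `Σ_k c_k/C_n ≤ K`
it is `W_n/(K·w_k)`; otherwise it is given by the two-regime formula determined
by the unique `m ∈ {1,...,K-1}` satisfying the sandwich condition. -/
noncomputable def nashRate (K : ℕ) (b w : ℕ → ℝ) (Bn Wn : ℝ) (k : ℕ) : ℝ :=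
  if (∑ j ∈ Finset.Icc 1 K, (Bn / Wn) / (b j / w j)) ≤ (K : ℝ) then
    Bn / (K * b k)
  else if (∑ j ∈ Finset.Icc 1 K, (b j / w j) / (Bn / Wn)) ≤ (K : ℝ) then
    Wn / (K * w k)
  else if h : ∃ m, m ∈ Finset.Icc 1 (K - 1) ∧
      (b m / w m) / (Bn / Wn) <
        ((m : ℝ) - ∑ j ∈ Finset.Icc 1 m, (b j / w j) / (Bn / Wn)) /
          ((K : ℝ) - (m : ℝ) - ∑ j ∈ Finset.Icc (m + 1) K, (Bn / Wn) / (b j / w j)) ∧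
      ((m : ℝ) - ∑ j ∈ Finset.Icc 1 m, (b j / w j) / (Bn / Wn)) /
          ((K : ℝ) - (m : ℝ) - ∑ j ∈ Finset.Icc (m + 1) K, (Bn / Wn) / (b j / w j)) <
        (b (m + 1) / w (m + 1)) / (Bn / Wn) then
    let m := h.choose
    let Δ : ℝ := (m : ℝ) * ((K : ℝ) - (m : ℝ)) -
      (∑ p ∈ Finset.Icc 1 m, b p / w p) * (∑ p ∈ Finset.Icc (m + 1) K, 1 / (b p / w p))
    if k ≤ m then
      (Wn / w k) * (((K : ℝ) - (m : ℝ)) -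
        ∑ p ∈ Finset.Icc (m + 1) K, (Bn / Wn) / (b p / w p)) / Δ
    else
      (Bn / b k) * ((m : ℝ) - ∑ p ∈ Finset.Icc 1 m, (b p / w p) / (Bn / Wn)) / Δ
  else 0

/-- A throughput vector `α` is feasible for the system `(K,b,w,N,B,W)` if it can be
decomposed into per-worker rates `A n k ≥ 0` respecting every worker's communication
and computation constraints. -/
def Feasible (N K : ℕ) (B W b w : ℕ → ℝ) (α : ℕ → ℝ) : Prop :=
  (∀ k ∈ Finset.Icc 1 K, 0 ≤ α k) ∧
  ∃ A : ℕ → ℕ → ℝ,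
    (∀ n ∈ Finset.Icc 1 N, ∀ k ∈ Finset.Icc 1 K, 0 ≤ A n k) ∧
    (∀ k ∈ Finset.Icc 1 K, α k = ∑ n ∈ Finset.Icc 1 N, A n k) ∧
    (∀ n ∈ Finset.Icc 1 N, ∑ k ∈ Finset.Icc 1 K, A n k * w k ≤ W n) ∧
    (∀ n ∈ Finset.Icc 1 N, ∑ k ∈ Finset.Icc 1 K, A n k * b k ≤ B n)

lemma nashRate_comm (K : ℕ) (b w : ℕ → ℝ) (Bn Wn : ℝ) (k : ℕ)
    (h : (∑ j ∈ Finset.Icc 1 K, (Bn / Wn) / (b j / w j)) ≤ (K : ℝ)) :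
    nashRate K b w Bn Wn k = Bn / (K * b k) := by
  unfold nashRate; rw [if_pos h]

lemma nashRate_comp (K : ℕ) (b w : ℕ → ℝ) (Bn Wn : ℝ) (k : ℕ)
    (h1 : ¬ (∑ j ∈ Finset.Icc 1 K, (Bn / Wn) / (b j / w j)) ≤ (K : ℝ))
    (h2 : (∑ j ∈ Finset.Icc 1 K, (b j / w j) / (Bn / Wn)) ≤ (K : ℝ)) :
    nashRate K b w Bn Wn k = Wn / (K * w k) := by
  unfold nashRate; rw [if_neg h1, if_pos h2]

/-- On a single worker of power `W > 0` with `K ≥ 2` applications and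
`c_1 < ... < c_K`, setting `B_low = W·K/(Σ_k 1/c_k)` and `B_high = (W/K)·Σ_k c_k`,
we have `B_low ≤ B_high`; at bandwidth `B_low` the Nash throughput of `k` is
`B_low/(K·b_k) = W/(b_k·Σ_p 1/c_p)`, at `B_high` it is `W/(K·w_k)`; the ratio is
`K/(c_k·Σ_p 1/c_p)`; and any application with ratio `> 1` sees its throughput
strictly decrease when the bandwidth is increased from `B_low` to `B_high`. -/
theorem stmt_18 (K : ℕ) (hK : 2 ≤ K) (b w : ℕ → ℝ) (Wn : ℝ) (hWn : 0 < Wn)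
    (hb : ∀ k ∈ Finset.Icc 1 K, 0 < b k) (hw : ∀ k ∈ Finset.Icc 1 K, 0 < w k)
    (hc : ∀ k, 1 ≤ k → k < K → b k / w k < b (k + 1) / w (k + 1)) :
    let Blow : ℝ := Wn * K / (∑ k ∈ Finset.Icc 1 K, 1 / (b k / w k))
    let Bhigh : ℝ := (Wn / K) * ∑ k ∈ Finset.Icc 1 K, b k / w k
    Blow ≤ Bhigh ∧
    (∀ k ∈ Finset.Icc 1 K,
      nashRate K b w Blow Wn k = Blow / (K * b k) ∧
      nashRate K b w Blow Wn k = Wn / (b k * ∑ p ∈ Finset.Icc 1 K, 1 / (b p / w p))) ∧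
    (∀ k ∈ Finset.Icc 1 K, nashRate K b w Bhigh Wn k = Wn / (K * w k)) ∧
    (∀ k ∈ Finset.Icc 1 K,
      nashRate K b w Blow Wn k / nashRate K b w Bhigh Wn k =
        (K : ℝ) / ((b k / w k) * ∑ p ∈ Finset.Icc 1 K, 1 / (b p / w p))) ∧
    (∀ k ∈ Finset.Icc 1 K,
      1 < (K : ℝ) / ((b k / w k) * ∑ p ∈ Finset.Icc 1 K, 1 / (b p / w p)) →
      nashRate K b w Bhigh Wn k < nashRate K b w Blow Wn k) := by
  intro Blow Bhigh
  have hKR : (0:ℝ) < K := by positivity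
  have hc0 : ∀ k ∈ Finset.Icc 1 K, 0 < b k / w k :=
    fun k hk => div_pos (hb k hk) (hw k hk)
  have h1s : 1 ∈ Finset.Icc 1 K := by simp; omega
  have h2s : 2 ∈ Finset.Icc 1 K := by simp; omega
  have hS : 0 < ∑ p ∈ Finset.Icc 1 K, 1 / (b p / w p) :=
    Finset.sum_pos (fun p hp => by have := hc0 p hp; positivity) ⟨1, h1s⟩
  have hT : 0 < ∑ p ∈ Finset.Icc 1 K, b p / w p := Finset.sum_pos hc0 ⟨1, h1s⟩
  have h12 : b 1 / w 1 < b 2 / w 2 := hc 1 le_rfl (by omega)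
  -- strict Cauchy-Schwarz : K² < S·T
  have hCS : (K:ℝ) * K < (∑ p ∈ Finset.Icc 1 K, 1 / (b p / w p)) * (∑ p ∈ Finset.Icc 1 K, (b p / w p)) := by
    have key : ∀ i ∈ Finset.Icc 1 K, 2 * (K:ℝ) ≤ ∑ j ∈ Finset.Icc 1 K, ((b j / w j) / (b i / w i) + (b i / w i) / (b j / w j)) := by
      intro i hi
      have : ∑ j ∈ Finset.Icc 1 K, (2:ℝ) ≤ ∑ j ∈ Finset.Icc 1 K, ((b j / w j) / (b i / w i) + (b i / w i) / (b j / w j)) := by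
        refine Finset.sum_le_sum fun j hj => ?_
        have h1 := hc0 i hi; have h2 := hc0 j hj
        rw [div_add_div _ _ (ne_of_gt h1) (ne_of_gt h2), le_div_iff₀ (by positivity)]
        nlinarith [sq_nonneg ((b i / w i) - (b j / w j))]
      simpa [Finset.sum_const, Nat.card_Icc, mul_comm] using this
    have key1 : 2 * (K:ℝ) < ∑ j ∈ Finset.Icc 1 K, ((b j / w j) / (b 1 / w 1) + (b 1 / w 1) / (b j / w j)) := by
      have hlt : ∑ j ∈ Finset.Icc 1 K, (2:ℝ) < ∑ j ∈ Finset.Icc 1 K, ((b j / w j) / (b 1 / w 1) + (b 1 / w 1) / (b j / w j)) := by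
        refine Finset.sum_lt_sum (fun j hj => ?_) ⟨2, h2s, ?_⟩
        · have h1 := hc0 1 h1s; have h2 := hc0 j hj
          rw [div_add_div _ _ (ne_of_gt h1) (ne_of_gt h2), le_div_iff₀ (by positivity)]
          nlinarith [sq_nonneg ((b 1 / w 1) - (b j / w j))]
        · have h1 := hc0 1 h1s; have h2 := hc0 2 h2s
          rw [div_add_div _ _ (ne_of_gt h1) (ne_of_gt h2), lt_div_iff₀ (by positivity)]
          nlinarith [sq_nonneg ((b 1 / w 1) - (b 2 / w 2)), h12]
      calc 2 * (K:ℝ) = ∑ j ∈ Finset.Icc 1 K, (2:ℝ) := by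
              simp [Finset.sum_const, Nat.card_Icc, mul_comm]
        _ < _ := hlt
    have hdouble : ∑ i ∈ Finset.Icc 1 K, ∑ j ∈ Finset.Icc 1 K, ((b j / w j) / (b i / w i) + (b i / w i) / (b j / w j))
        = 2 * ((∑ p ∈ Finset.Icc 1 K, 1 / (b p / w p)) * (∑ p ∈ Finset.Icc 1 K, (b p / w p))) := by
      have e1 : (∑ p ∈ Finset.Icc 1 K, 1 / (b p / w p)) * (∑ p ∈ Finset.Icc 1 K, (b p / w p)) = ∑ i ∈ Finset.Icc 1 K, ∑ j ∈ Finset.Icc 1 K, (b j / w j) / (b i / w i) := by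
        rw [Finset.sum_mul_sum]
        exact Finset.sum_congr rfl fun i hi => Finset.sum_congr rfl fun j hj => by
          rw [one_div, inv_mul_eq_div]
      have e2 : (∑ p ∈ Finset.Icc 1 K, 1 / (b p / w p)) * (∑ p ∈ Finset.Icc 1 K, (b p / w p)) = ∑ i ∈ Finset.Icc 1 K, ∑ j ∈ Finset.Icc 1 K, (b i / w i) / (b j / w j) := by
        rw [mul_comm, Finset.sum_mul_sum]
        exact Finset.sum_congr rfl fun i hi => Finset.sum_congr rfl fun j hj => by
          rw [one_div, ← div_eq_mul_inv]
      calc ∑ i ∈ Finset.Icc 1 K, ∑ j ∈ Finset.Icc 1 K, ((b j / w j) / (b i / w i) + (b i / w i) / (b j / w j))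
          = (∑ i ∈ Finset.Icc 1 K, ∑ j ∈ Finset.Icc 1 K, (b j / w j) / (b i / w i)) + ∑ i ∈ Finset.Icc 1 K, ∑ j ∈ Finset.Icc 1 K, (b i / w i) / (b j / w j) := by
            rw [← Finset.sum_add_distrib]
            exact Finset.sum_congr rfl fun i _ => Finset.sum_add_distrib
        _ = _ := by rw [← e1, ← e2]; ring
    have houter : ∑ i ∈ Finset.Icc 1 K, 2 * (K:ℝ) < ∑ i ∈ Finset.Icc 1 K, ∑ j ∈ Finset.Icc 1 K, ((b j / w j) / (b i / w i) + (b i / w i) / (b j / w j)) :=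
      Finset.sum_lt_sum key ⟨1, h1s, key1⟩
    have hconst : ∑ i ∈ Finset.Icc 1 K, 2 * (K:ℝ) = 2 * (K * K) := by
      simp [Finset.sum_const, Nat.card_Icc]; ring
    rw [hconst, hdouble] at houter
    linarith
  have hBlowWn : Blow / Wn = (K:ℝ) / ∑ p ∈ Finset.Icc 1 K, 1 / (b p / w p) := by
    show Wn * K / (∑ p ∈ Finset.Icc 1 K, 1 / (b p / w p)) / Wn = _
    rw [div_div, mul_comm (∑ p ∈ Finset.Icc 1 K, 1 / (b p / w p)) Wn,
      mul_div_mul_left _ _ (ne_of_gt hWn)]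
  have hBhighWn : Bhigh / Wn = (∑ p ∈ Finset.Icc 1 K, (b p / w p)) / K := by
    show (Wn / K) * (∑ p ∈ Finset.Icc 1 K, (b p / w p)) / Wn = _
    field_simp
  -- condition at Blow
  have hsumLow : ∑ j ∈ Finset.Icc 1 K, (Blow / Wn) / (b j / w j) = (K:ℝ) := by
    have : ∀ j ∈ Finset.Icc 1 K, (Blow / Wn) / (b j / w j) = (Blow / Wn) * (1 / (b j / w j)) :=
      fun j hj => div_eq_mul_one_div _ _
    rw [Finset.sum_congr rfl this, ← Finset.mul_sum, hBlowWn,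
      div_mul_cancel₀ _ (ne_of_gt hS)]
  -- conditions at Bhigh
  have hsumHigh1 : ¬ (∑ j ∈ Finset.Icc 1 K, (Bhigh / Wn) / (b j / w j)) ≤ (K:ℝ) := by
    have heq : ∑ j ∈ Finset.Icc 1 K, (Bhigh / Wn) / (b j / w j)
        = (∑ p ∈ Finset.Icc 1 K, (b p / w p)) / K * ∑ p ∈ Finset.Icc 1 K, 1 / (b p / w p) := by
      have : ∀ j ∈ Finset.Icc 1 K, (Bhigh / Wn) / (b j / w j) = (Bhigh / Wn) * (1 / (b j / w j)) :=
        fun j hj => div_eq_mul_one_div _ _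
      rw [Finset.sum_congr rfl this, ← Finset.mul_sum, hBhighWn]
    rw [heq, not_le, div_mul_eq_mul_div, lt_div_iff₀ hKR]
    nlinarith [hCS]
  have hsumHigh2 : ∑ j ∈ Finset.Icc 1 K, (b j / w j) / (Bhigh / Wn) ≤ (K:ℝ) := by
    have heq : ∑ j ∈ Finset.Icc 1 K, (b j / w j) / (Bhigh / Wn) = (K:ℝ) := by
      have : ∀ j ∈ Finset.Icc 1 K, (b j / w j) / (Bhigh / Wn) = (b j / w j) * K / (∑ p ∈ Finset.Icc 1 K, (b p / w p)) :=
        fun j hj => by rw [hBhighWn, div_div_eq_mul_div]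
      rw [Finset.sum_congr rfl this, ← Finset.sum_div, ← Finset.sum_mul,
        mul_comm, mul_div_assoc, div_self (ne_of_gt hT), mul_one]
    exact le_of_eq heq
  have hLowEval : ∀ k, nashRate K b w Blow Wn k = Blow / (K * b k) :=
    fun k => nashRate_comm K b w Blow Wn k (le_of_eq hsumLow)
  have hHighEval : ∀ k, nashRate K b w Bhigh Wn k = Wn / (K * w k) :=
    fun k => nashRate_comp K b w Bhigh Wn k hsumHigh1 hsumHigh2
  have hLowEval2 : ∀ k ∈ Finset.Icc 1 K, nashRate K b w Blow Wn k
      = Wn / (b k * ∑ p ∈ Finset.Icc 1 K, 1 / (b p / w p)) := by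
    intro k hk
    rw [hLowEval k]
    show Wn * K / (∑ p ∈ Finset.Icc 1 K, 1 / (b p / w p)) / (K * b k) = _
    have hbk := hb k hk
    rw [div_div, div_eq_div_iff (mul_pos hS (mul_pos hKR hbk)).ne'
      (mul_pos hbk hS).ne']
    ring
  have hBB : Blow ≤ Bhigh := by
    show Wn * K / (∑ p ∈ Finset.Icc 1 K, 1 / (b p / w p)) ≤ (Wn / K) * ∑ p ∈ Finset.Icc 1 K, (b p / w p)
    rw [div_le_iff₀ hS, div_mul_eq_mul_div, div_mul_eq_mul_div, le_div_iff₀ hKR]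
    nlinarith [mul_pos hWn (sub_pos.mpr hCS)]
  clear_value Blow Bhigh
  refine ⟨hBB, fun k hk => ⟨hLowEval k, hLowEval2 k hk⟩, fun k hk => hHighEval k, ?_, ?_⟩
  · intro k hk
    rw [hLowEval2 k hk, hHighEval k]
    have hbk := hb k hk; have hwk := hw k hk
    rw [div_div_div_comm, div_self (ne_of_gt hWn), one_div_div,
      div_eq_div_iff (mul_pos hbk hS).ne' (mul_pos (hc0 k hk) hS).ne']
    field_simp
  · intro k hk hratio
    have hEq : nashRate K b w Blow Wn k / nashRate K b w Bhigh Wn k =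
        (K:ℝ) / ((b k / w k) * ∑ p ∈ Finset.Icc 1 K, 1 / (b p / w p)) := by
      rw [hLowEval2 k hk, hHighEval k]
      have hbk := hb k hk; have hwk := hw k hk
      rw [div_div_div_comm, div_self (ne_of_gt hWn), one_div_div,
        div_eq_div_iff (mul_pos hbk hS).ne' (mul_pos (hc0 k hk) hS).ne']
      field_simp
    have hpos : 0 < nashRate K b w Bhigh Wn k := by
      rw [hHighEval k]; have := hw k hk; positivity
    rw [← hEq] at hratio
    exact (one_lt_div hpos).mp hratio
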